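/- Let Π be an equitable partition with t equal-size cells of a d-class association scheme with quotient matrices M₀,...,M_d, reduced modulo a prime p. Suppose there is an index i with p | p_{i,i}^k for all k ∈ {0,...,d}. Then over F_q (q a power of p), the matrix N = [M_i | α I_t] generates an LCD code of length 2t and dimension t for every nonzero α ∈ F_q. -/

import Mathlib

open Matrix

/-- The Euclidean dual of a linear code `C ⊆ F^ι`:
all vectors orthogonal (w.r.t. the standard bilinear form) to every codeword. -/
def dualCode (F : Type*) [Field F] {ι : Type*} [Fintype ι]
    (C : Submodule F (ι → F)) : Submodule F (ι → F) where
  carrier := {v | ∀ c ∈ C, v ⬝ᵥ c = 0}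
  add_mem' := by
    intro a b ha hb c hc
    simp [add_dotProduct, ha c hc, hb c hc]
  zero_mem' := by intro c hc; simp
  smul_mem' := by
    intro r a ha c hc
    simp [smul_dotProduct, ha c hc]

/-- The row space of a matrix: the span of its rows. -/
def rowSpace (F : Type*) [Field F] {κ ι : Type*} (G : Matrix κ ι F) :
    Submodule F (ι → F) := Submodule.span F (Set.range fun k => G k)

/-- If the quotient matrices mod `p` satisfy the scheme relations
and `p ∣ p_{i,i}^k` for all `k`, then `N = [M_i | α I]` generates an LCD code
of length `2t` and dimension `t` over `F_q` for every `α ≠ 0`. -/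
theorem stmt11 (F : Type*) [Field F] [Fintype F] {p : ℕ} (hp : p.Prime)
    [CharP F p] {d t : ℕ}
    (pnum : Fin (d + 1) → Fin (d + 1) → Fin (d + 1) → ℕ)
    (M : Fin (d + 1) → Matrix (Fin t) (Fin t) F)
    (hsym : ∀ a, (M a)ᵀ = M a)
    (hmul : ∀ a b, M a * M b = ∑ k, (pnum a b k : F) • M k)
    (i : Fin (d + 1)) (hdiv : ∀ k, p ∣ pnum i i k)
    (α : F) (hα : α ≠ 0) :
    rowSpace F (fromCols (M i) (α • (1 : Matrix (Fin t) (Fin t) F))) ⊓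
        dualCode F (rowSpace F (fromCols (M i) (α • (1 : Matrix (Fin t) (Fin t) F)))) = ⊥ ∧
      Module.finrank F ↥(rowSpace F (fromCols (M i) (α • (1 : Matrix (Fin t) (Fin t) F)))) = t := by
  set N := fromCols (M i) (α • (1 : Matrix (Fin t) (Fin t) F)) with hN
  have hMi : M i * M i = 0 := by
    rw [hmul]
    apply Finset.sum_eq_zero
    intro k _
    have : (pnum i i k : F) = 0 := (CharP.cast_eq_zero_iff F p _).mpr (hdiv k)
    simp [this]
  have hNNT : N * Nᵀ = (α * α) • 1 := by
    rw [hN, transpose_fromCols, fromCols_mul_fromRows, hsym, hMi]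
    simp [Matrix.transpose_smul, Matrix.smul_mul, Matrix.mul_smul, smul_smul]
  have key : ∀ c : Fin t → F, N *ᵥ (c ᵥ* N) = 0 → c = 0 := by
    intro c hc
    have h1 : (N * Nᵀ) *ᵥ c = 0 := by
      rw [← mulVec_mulVec, mulVec_transpose, hc]
    rw [hNNT] at h1
    have h2 : (α * α) • c = 0 := by
      simpa [smul_mulVec, one_mulVec] using h1
    have hne : α * α ≠ 0 := mul_ne_zero hα hα
    have := smul_eq_zero.mp h2
    tauto
  have hmm : ∀ v, v ∈ rowSpace F N ↔ ∃ c : Fin t → F, c ᵥ* N = v := by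
    intro v
    rw [rowSpace, ← Set.image_univ, Finsupp.mem_span_image_iff_linearCombination]
    constructor
    · rintro ⟨l, _, rfl⟩
      refine ⟨fun k => l k, ?_⟩
      ext x
      rw [Finsupp.linearCombination_apply, Finsupp.sum_fintype]
      · simp [vecMul, dotProduct, mul_comm]
      · intro k; simp
    · rintro ⟨c, rfl⟩
      refine ⟨Finsupp.equivFunOnFinite.symm c, by simp, ?_⟩
      ext x
      rw [Finsupp.linearCombination_apply, Finsupp.sum_fintype]
      · simp [vecMul, dotProduct, mul_comm]
      · intro k; simp
  constructor
  · rw [eq_bot_iff]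
    rintro v ⟨hv1, hv2⟩
    obtain ⟨c, rfl⟩ := (hmm _).mp hv1
    have hmv : N *ᵥ (c ᵥ* N) = 0 := by
      ext j
      have hrow : N j ∈ rowSpace F N := Submodule.subset_span ⟨j, rfl⟩
      have := hv2 (N j) hrow
      simpa [mulVec, dotProduct_comm] using this
    have := key c hmv
    simp [this]
  · have hli : LinearIndependent F (fun k => N k) := by
      rw [Fintype.linearIndependent_iff]
      intro c hc
      have hvm : c ᵥ* N = 0 := by
        ext x
        have := congrFun hc x
        simpa [vecMul, dotProduct, Finset.sum_apply, mul_comm] using this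
      have := key c (by rw [hvm]; simp)
      intro j; rw [this]; rfl
    rw [rowSpace]
    rw [finrank_span_eq_card hli]
    simp
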